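/- arXiv:2101.03528 — 8 statements merged into one kernel-verified Lean document; each statement's English description precedes it below -/
import Mathlib

section
/- Each logic which enjoys the κ-ary global (respectively local, parametrized local) deduction–detachment theorem and has an antitheorem (in the parametrized local case, an antitheorem of cardinality at most |Var|) also enjoys the κ-ary global (respectively local, parametrized local) inconsistency lemma. -/
set_option linter.unusedVariables false

open FirstOrder Set

universe u

/-- Substitution composition for terms of a first-order language. -/
theorem FirstOrder.Language.Term.subst_subst' {L : FirstOrder.Language.{u, u}} {α β γ : Type u}
    (t : L.Term α) (f : α → L.Term β) (g : β → L.Term γ) :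
    (t.subst f).subst g = t.subst (fun i => (f i).subst g) := by
  induction t with
  | var => rfl
  | func f ts ih => simp only [Language.Term.subst, ih]

/-- A logic over the absolutely free algebra of `L`-terms in variables `Var`. -/
structure Logic (L : FirstOrder.Language.{u, u}) (Var : Type u) where
  Deriv : Set (L.Term Var) → L.Term Var → Prop
  deriv_refl : ∀ φ : L.Term Var, Deriv {φ} φ
  deriv_mono : ∀ {Γ Δ : Set (L.Term Var)} {φ : L.Term Var}, Deriv Γ φ → Γ ⊆ Δ → Deriv Δ φ
  deriv_cut : ∀ {Γ Φ : Set (L.Term Var)} {φ : L.Term Var},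
      (∀ ψ ∈ Φ, Deriv Γ ψ) → Deriv Φ φ → Deriv Γ φ
  deriv_subst : ∀ {Γ : Set (L.Term Var)} {φ : L.Term Var} (σ : Var → L.Term Var),
      Deriv Γ φ → Deriv ((fun t => t.subst σ) '' Γ) (φ.subst σ)

namespace Logic

variable {L : FirstOrder.Language.{u, u}} {Var : Type u} (Lg : Logic L Var)

/-- `Γ ⊢ φ` for every `φ ∈ Δ`. -/
def DerivAll (Γ Δ : Set (L.Term Var)) : Prop := ∀ φ ∈ Δ, Lg.Deriv Γ φ

/-- `Γ ⊢ Fm`, i.e. `Γ` derives every formula. -/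
def Inc (Γ : Set (L.Term Var)) : Prop := ∀ φ : L.Term Var, Lg.Deriv Γ φ

/-- A theory of the logic: a deductively closed set of formulas. -/
def IsTheory (T : Set (L.Term Var)) : Prop := ∀ φ : L.Term Var, Lg.Deriv T φ → φ ∈ T

/-- A simple theory: a maximal non-trivial theory. -/
def IsSimple (T : Set (L.Term Var)) : Prop :=
  Lg.IsTheory T ∧ T ≠ univ ∧
    ∀ T' : Set (L.Term Var), Lg.IsTheory T' → T' ≠ univ → T ⊆ T' → T' = T

/-- A semisimple theory: an intersection of simple theories. -/
def IsSemisimple (T : Set (L.Term Var)) : Prop :=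
  ∃ S : Set (Set (L.Term Var)), (∀ U ∈ S, Lg.IsSimple U) ∧ T = ⋂₀ S

/-- A semisimple logic: every theory is an intersection of simple theories. -/
def Semisimple : Prop := ∀ T : Set (L.Term Var), Lg.IsTheory T → Lg.IsSemisimple T

/-- A coatomic logic: every non-trivial theory extends to a simple theory. -/
def Coatomic : Prop :=
  ∀ T : Set (L.Term Var), Lg.IsTheory T → T ≠ univ → ∃ U, Lg.IsSimple U ∧ T ⊆ U

/-- A matrix `⟨A, F⟩` is a model of the logic if the preimage of `F` under any
homomorphism (equivalently, the realization along any valuation) is a theory. -/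
def IsModel (A : Type u) [L.Structure A] (F : Set A) : Prop :=
  ∀ v : Var → A, Lg.IsTheory {φ : L.Term Var | φ.realize v ∈ F}

/-- `Γ ⊢ ∅`: `Γ` cannot be jointly designated in any non-trivial model. -/
def Antitheorem (Γ : Set (L.Term Var)) : Prop :=
  ∀ (A : Type u) [L.Structure A], ∀ F : Set A, Lg.IsModel A F → F ≠ univ →
    ∀ v : Var → A, ¬((fun φ : L.Term Var => φ.realize v) '' Γ ⊆ F)

/-- κ-compactness: every inconsistent set has an inconsistent subset of size `< κ`. -/
def Compact (κ : Cardinal.{u}) : Prop :=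
  ∀ Γ : Set (L.Term Var), Lg.Inc Γ → ∃ Γ' ⊆ Γ, Cardinal.mk ↥Γ' < κ ∧ Lg.Inc Γ'

/-- κ-arity: any derivation uses fewer than κ premises. -/
def Ary (κ : Cardinal.{u}) : Prop :=
  ∀ (Γ : Set (L.Term Var)) (φ : L.Term Var), Lg.Deriv Γ φ →
    ∃ Γ' ⊆ Γ, Cardinal.mk ↥Γ' < κ ∧ Lg.Deriv Γ' φ

end Logic

/-- A parametrized family: for each ordinal `α`, a family of sets of formulas in
`α`-many variable slots together with parameter slots (indexed by `Var`). -/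
abbrev PFam (L : FirstOrder.Language.{u, u}) (Var : Type u) : Type (u + 1) :=
  ∀ α : Ordinal.{u}, Set (Set (L.Term (α.ToType ⊕ Var)))

/-- A local (parameter-free) family. -/
abbrev LFam (L : FirstOrder.Language.{u, u}) (Var : Type u) : Type (u + 1) :=
  ∀ α : Ordinal.{u}, Set (Set (L.Term α.ToType))

/-- A global family: a single set of formulas for each ordinal `α`. -/
abbrev GFam (L : FirstOrder.Language.{u, u}) (Var : Type u) : Type (u + 1) :=
  ∀ α : Ordinal.{u}, Set (L.Term α.ToType)

namespace Logic

variable {L : FirstOrder.Language.{u, u}} {Var : Type u}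

/-- `I(φ̄, π̄)`: instantiation of a parametrized set of formulas. -/
def pInst {α : Ordinal.{u}} (I : Set (L.Term (α.ToType ⊕ Var)))
    (phis : α.ToType → L.Term Var) (pis : Var → L.Term Var) : Set (L.Term Var) :=
  (fun t => t.subst (Sum.elim phis pis)) '' I

/-- `I(φ̄)`: instantiation of a parameter-free set of formulas. -/
def lInst {α : Ordinal.{u}} (I : Set (L.Term α.ToType))
    (phis : α.ToType → L.Term Var) : Set (L.Term Var) :=
  (fun t => t.subst phis) '' I

variable (Lg : Logic L Var)

/-- The κ-ary parametrized local inconsistency lemma w.r.t. the family `Ψ`. -/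
def ParamLocalIL (κ : Cardinal.{u}) (Ψ : PFam L Var) : Prop :=
  ∀ α : Ordinal.{u}, 0 < α → α < κ.ord →
    ∀ (Γ : Set (L.Term Var)) (phis : α.ToType → L.Term Var),
      Lg.Inc (Γ ∪ range phis) ↔
        ∃ I ∈ Ψ α, ∃ pis : Var → L.Term Var, Lg.DerivAll Γ (pInst I phis pis)

/-- The κ-ary local inconsistency lemma w.r.t. the family `Ψ`. -/
def LocalIL (κ : Cardinal.{u}) (Ψ : LFam L Var) : Prop :=
  ∀ α : Ordinal.{u}, 0 < α → α < κ.ord →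
    ∀ (Γ : Set (L.Term Var)) (phis : α.ToType → L.Term Var),
      Lg.Inc (Γ ∪ range phis) ↔ ∃ I ∈ Ψ α, Lg.DerivAll Γ (lInst I phis)

/-- The κ-ary global inconsistency lemma w.r.t. the family `Ψ`. -/
def GlobalIL (κ : Cardinal.{u}) (Ψ : GFam L Var) : Prop :=
  Lg.LocalIL κ (fun α => {Ψ α})

/-- The κ-ary dual parametrized local inconsistency lemma w.r.t. the family `Ψ`. -/
def DualParamLocalIL (κ : Cardinal.{u}) (Ψ : PFam L Var) : Prop :=
  ∀ α : Ordinal.{u}, 0 < α → α < κ.ord →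
    ∀ (Γ : Set (L.Term Var)) (phis : α.ToType → L.Term Var),
      (∀ i, Lg.Deriv Γ (phis i)) ↔
        ∀ I ∈ Ψ α, ∀ pis : Var → L.Term Var, Lg.Inc (Γ ∪ pInst I phis pis)

/-- The κ-ary dual local inconsistency lemma w.r.t. the family `Ψ`. -/
def DualLocalIL (κ : Cardinal.{u}) (Ψ : LFam L Var) : Prop :=
  ∀ α : Ordinal.{u}, 0 < α → α < κ.ord →
    ∀ (Γ : Set (L.Term Var)) (phis : α.ToType → L.Term Var),
      (∀ i, Lg.Deriv Γ (phis i)) ↔ ∀ I ∈ Ψ α, Lg.Inc (Γ ∪ lInst I phis)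

/-- The κ-ary dual global inconsistency lemma w.r.t. the family `Ψ`. -/
def DualGlobalIL (κ : Cardinal.{u}) (Ψ : GFam L Var) : Prop :=
  Lg.DualLocalIL κ (fun α => {Ψ α})

/-- The κ-ary classical parametrized local IL: both the ordinary and dual IL. -/
def ClassicalParamLocalIL (κ : Cardinal.{u}) (Ψ : PFam L Var) : Prop :=
  Lg.ParamLocalIL κ Ψ ∧ Lg.DualParamLocalIL κ Ψ

/-- The κ-ary classical local IL: both the ordinary and dual IL. -/
def ClassicalLocalIL (κ : Cardinal.{u}) (Ψ : LFam L Var) : Prop :=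
  Lg.LocalIL κ Ψ ∧ Lg.DualLocalIL κ Ψ

/-- The κ-ary classical global IL: both the ordinary and dual IL. -/
def ClassicalGlobalIL (κ : Cardinal.{u}) (Ψ : GFam L Var) : Prop :=
  Lg.GlobalIL κ Ψ ∧ Lg.DualGlobalIL κ Ψ

/-- The κ-ary parametrized local law of the excluded middle w.r.t. `Ψ`. -/
def ParamLocalLEM (κ : Cardinal.{u}) (Ψ : PFam L Var) : Prop :=
  (∀ α : Ordinal.{u}, 0 < α → α < κ.ord → ∀ I ∈ Ψ α,
    ∀ (phis : α.ToType → L.Term Var) (pis : Var → L.Term Var),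
      Lg.Inc (range phis ∪ pInst I phis pis)) ∧
  (∀ α : Ordinal.{u}, 0 < α → α < κ.ord →
    ∀ (Γ : Set (L.Term Var)) (phis : α.ToType → L.Term Var) (ψ : L.Term Var),
      Lg.Deriv (Γ ∪ range phis) ψ →
      (∀ I ∈ Ψ α, ∀ pis : Var → L.Term Var, Lg.Deriv (Γ ∪ pInst I phis pis) ψ) →
      Lg.Deriv Γ ψ)

/-- The κ-ary local law of the excluded middle w.r.t. `Ψ`. -/
def LocalLEM (κ : Cardinal.{u}) (Ψ : LFam L Var) : Prop :=
  (∀ α : Ordinal.{u}, 0 < α → α < κ.ord → ∀ I ∈ Ψ α,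
    ∀ phis : α.ToType → L.Term Var, Lg.Inc (range phis ∪ lInst I phis)) ∧
  (∀ α : Ordinal.{u}, 0 < α → α < κ.ord →
    ∀ (Γ : Set (L.Term Var)) (phis : α.ToType → L.Term Var) (ψ : L.Term Var),
      Lg.Deriv (Γ ∪ range phis) ψ →
      (∀ I ∈ Ψ α, Lg.Deriv (Γ ∪ lInst I phis) ψ) → Lg.Deriv Γ ψ)

/-- The κ-ary simple parametrized local IL w.r.t. `Ψ`. -/
def SimpleParamLocalIL (κ : Cardinal.{u}) (Ψ : PFam L Var) : Prop :=
  (∀ α : Ordinal.{u}, 0 < α → α < κ.ord → ∀ I ∈ Ψ α,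
    ∀ (phis : α.ToType → L.Term Var) (pis : Var → L.Term Var),
      Lg.Inc (range phis ∪ pInst I phis pis)) ∧
  (∀ α : Ordinal.{u}, 0 < α → α < κ.ord →
    ∀ T : Set (L.Term Var), Lg.IsSimple T → ∀ phis : α.ToType → L.Term Var,
      Lg.Inc (T ∪ range phis) →
        ∃ I ∈ Ψ α, ∃ pis : Var → L.Term Var, Lg.DerivAll T (pInst I phis pis))

/-- The κ-ary simple local IL w.r.t. `Ψ`. -/
def SimpleLocalIL (κ : Cardinal.{u}) (Ψ : LFam L Var) : Prop :=
  (∀ α : Ordinal.{u}, 0 < α → α < κ.ord → ∀ I ∈ Ψ α,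
    ∀ phis : α.ToType → L.Term Var, Lg.Inc (range phis ∪ lInst I phis)) ∧
  (∀ α : Ordinal.{u}, 0 < α → α < κ.ord →
    ∀ T : Set (L.Term Var), Lg.IsSimple T → ∀ phis : α.ToType → L.Term Var,
      Lg.Inc (T ∪ range phis) → ∃ I ∈ Ψ α, Lg.DerivAll T (lInst I phis))

end Logic

/-- Family for the parametrized local DDT: sets of formulas `I(p̄, q, r̄)`. -/
abbrev PFamD (L : FirstOrder.Language.{u, u}) (Var : Type u) : Type (u + 1) :=
  ∀ α : Ordinal.{u}, Set (Set (L.Term (α.ToType ⊕ (PUnit.{u + 1} ⊕ Var))))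

/-- Family for the local DDT: sets of formulas `I(p̄, q)`. -/
abbrev LFamD (L : FirstOrder.Language.{u, u}) (Var : Type u) : Type (u + 1) :=
  ∀ α : Ordinal.{u}, Set (Set (L.Term (α.ToType ⊕ PUnit.{u + 1})))

/-- Family for the global DDT: a single set `I(p̄, q)` for each `α`. -/
abbrev GFamD (L : FirstOrder.Language.{u, u}) (Var : Type u) : Type (u + 1) :=
  ∀ α : Ordinal.{u}, Set (L.Term (α.ToType ⊕ PUnit.{u + 1}))

namespace Logic

variable {L : FirstOrder.Language.{u, u}} {Var : Type u}

/-- `I(φ̄, ψ)`: instantiation of a DDT set of formulas. -/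
def dInst {α : Ordinal.{u}} (I : Set (L.Term (α.ToType ⊕ PUnit.{u + 1})))
    (phis : α.ToType → L.Term Var) (ψ : L.Term Var) : Set (L.Term Var) :=
  (fun t => t.subst (Sum.elim phis (fun _ => ψ))) '' I

/-- `I(φ̄, ψ, π̄)`: instantiation of a parametrized DDT set of formulas. -/
def pdInst {α : Ordinal.{u}} (I : Set (L.Term (α.ToType ⊕ (PUnit.{u + 1} ⊕ Var))))
    (phis : α.ToType → L.Term Var) (ψ : L.Term Var) (pis : Var → L.Term Var) :
    Set (L.Term Var) :=
  (fun t => t.subst (Sum.elim phis (Sum.elim (fun _ => ψ) pis))) '' I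

variable (Lg : Logic L Var)

/-- The κ-ary local deduction--detachment theorem w.r.t. `Φ`. -/
def LocalDDT (κ : Cardinal.{u}) (Φ : LFamD L Var) : Prop :=
  ∀ α : Ordinal.{u}, 0 < α → α < κ.ord →
    ∀ (Γ : Set (L.Term Var)) (phis : α.ToType → L.Term Var) (ψ : L.Term Var),
      Lg.Deriv (Γ ∪ range phis) ψ ↔ ∃ I ∈ Φ α, Lg.DerivAll Γ (dInst I phis ψ)

/-- The κ-ary global deduction--detachment theorem w.r.t. `Φ`. -/
def GlobalDDT (κ : Cardinal.{u}) (Φ : GFamD L Var) : Prop :=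
  Lg.LocalDDT κ (fun α => {Φ α})

/-- The κ-ary parametrized local deduction--detachment theorem w.r.t. `Φ`. -/
def ParamLocalDDT (κ : Cardinal.{u}) (Φ : PFamD L Var) : Prop :=
  ∀ α : Ordinal.{u}, 0 < α → α < κ.ord →
    ∀ (Γ : Set (L.Term Var)) (phis : α.ToType → L.Term Var) (ψ : L.Term Var),
      Lg.Deriv (Γ ∪ range phis) ψ ↔
        ∃ I ∈ Φ α, ∃ pis : Var → L.Term Var, Lg.DerivAll Γ (pdInst I phis ψ pis)

/-- A protoimplication set: a set `Δ(p, q)` of formulas in two variables with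
`∅ ⊢ Δ(p, p)` and `p, Δ(p, q) ⊢ q` (stated via all instances, by structurality). -/
def HasProtoimplication : Prop :=
  ∃ Δ : Set (L.Term (ULift.{u} Bool)),
    (∀ φ : L.Term Var,
      Lg.DerivAll ∅ ((fun t => t.subst (fun _ => φ)) '' Δ)) ∧
    (∀ φ ψ : L.Term Var,
      Lg.Deriv (insert φ ((fun t => t.subst (fun b => if b.down then ψ else φ)) '' Δ)) ψ)

/-- A rule `Γ ⊢ φ̄` is antiadmissible: substitution instances preserve
inconsistency in every context. -/
def Antiadmissible {ι : Type u} (Γ : Set (L.Term Var)) (phis : ι → L.Term Var) : Prop :=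
  ∀ (σ : Var → L.Term Var) (Δ : Set (L.Term Var)),
    Lg.Inc (range (fun i => (phis i).subst σ) ∪ Δ) →
    Lg.Inc ((fun t => t.subst σ) '' Γ ∪ Δ)

/-- The semisimple companion of a logic: the logic determined by the
simple theories of `Lg`. -/
def companion (Lg : Logic L Var) : Logic L Var where
  Deriv Γ φ := ∀ T : Set (L.Term Var), Lg.IsSimple T →
    ∀ σ : Var → L.Term Var, (fun t => t.subst σ) '' Γ ⊆ T → φ.subst σ ∈ T
  deriv_refl := by
    intro φ T _ σ h
    exact h ⟨φ, rfl, rfl⟩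
  deriv_mono := by
    intro Γ Δ φ hΓ hsub T hT σ h
    exact hΓ T hT σ (fun x hx => h ((Set.image_mono hsub) hx))
  deriv_cut := by
    intro Γ Φ φ hΓ hΦ T hT σ h
    refine hΦ T hT σ ?_
    rintro x ⟨ψ, hψ, rfl⟩
    exact hΓ ψ hψ T hT σ h
  deriv_subst := by
    intro Γ φ σ hΓ T hT τ h
    rw [FirstOrder.Language.Term.subst_subst']
    refine hΓ T hT (fun v => (σ v).subst τ) ?_
    rintro x ⟨ψ, hψ, rfl⟩
    show (ψ.subst fun v => (σ v).subst τ) ∈ T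
    rw [← FirstOrder.Language.Term.subst_subst']
    exact h ⟨ψ.subst σ, ⟨ψ, hψ, rfl⟩, rfl⟩

/-- Equivalence of two parametrized IL families, stated through all of their
instances (which, by structurality, is equivalent to the schematic entailments
`I(p̄, q̄) ⊢ I'(p̄, π̄')`). -/
def FamEquiv (Lg : Logic L Var) (κ : Cardinal.{u}) (Ψ Ψ' : PFam L Var) : Prop :=
  (∀ α : Ordinal.{u}, 0 < α → α < κ.ord →
    ∀ I ∈ Ψ α, ∃ I' ∈ Ψ' α, ∃ pis' : Var → L.Term (α.ToType ⊕ Var),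
      ∀ (phis : α.ToType → L.Term Var) (rhos : Var → L.Term Var),
        Lg.DerivAll (pInst I phis rhos)
          (pInst I' phis (fun v => (pis' v).subst (Sum.elim phis rhos)))) ∧
  (∀ α : Ordinal.{u}, 0 < α → α < κ.ord →
    ∀ I' ∈ Ψ' α, ∃ I ∈ Ψ α, ∃ pis : Var → L.Term (α.ToType ⊕ Var),
      ∀ (phis : α.ToType → L.Term Var) (rhos : Var → L.Term Var),
        Lg.DerivAll (pInst I' phis rhos)
          (pInst I phis (fun v => (pis v).subst (Sum.elim phis rhos))))

end Logic



section Aux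

open FirstOrder

universe v

namespace Logic

variable {L : FirstOrder.Language.{u, u}} {Var : Type u}

theorem subst_var' (t : L.Term Var) : t.subst Language.Term.var = t := by
  induction t with
  | var => rfl
  | func f ts ih => simp only [Language.Term.subst, ih]

theorem subst_relabel' {α β γ : Type u} (t : L.Term α) (f : α → β) (g : β → L.Term γ) :
    (t.relabel f).subst g = t.subst (g ∘ f) := by
  induction t with
  | var => rfl
  | func f ts ih => simp only [Language.Term.relabel, Language.Term.subst, ih]

/-- The absolutely free algebra of terms as an `L`-structure. -/
def termStruc : L.Structure (L.Term Var) :=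
  ⟨fun f ts => Language.Term.func f ts, fun _ _ => False⟩

theorem realize_termStruc (v : Var → L.Term Var) (t : L.Term Var) :
    @Language.Term.realize L (L.Term Var) (termStruc) Var v t = t.subst v := by
  induction t with
  | var => rfl
  | func f ts ih =>
    simp only [Language.Term.realize, Language.Term.subst, ih]
    rfl

variable (Lg : Logic L Var)

/-- Any set deriving an antitheorem is inconsistent. -/
theorem inc_of_derivAll_antitheorem {Γ₀ Δ : Set (L.Term Var)}
    (h : Lg.Antitheorem Γ₀) (hd : Lg.DerivAll Δ Γ₀) : Lg.Inc Δ := by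
  by_contra hn
  simp only [Logic.Inc, not_forall] at hn
  obtain ⟨ψ, hψ⟩ := hn
  set T : Set (L.Term Var) := {φ | Lg.Deriv Δ φ} with hT
  letI : L.Structure (L.Term Var) := termStruc
  have hmodel : Lg.IsModel (L.Term Var) T := by
    intro v φ hφ
    simp only [Set.mem_setOf_eq, realize_termStruc] at hφ ⊢
    have h2 := Lg.deriv_subst v hφ
    refine Lg.deriv_cut ?_ h2
    rintro χ ⟨ρ, hρ, rfl⟩
    exact hρ
  have hne : T ≠ Set.univ := by
    intro he
    exact hψ (by rw [hT] at he; have := he ▸ Set.mem_univ ψ; exact this)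
  have := h (L.Term Var) T hmodel hne Language.Term.var
  refine this ?_
  rintro x ⟨γ, hγ, rfl⟩
  simp only [realize_termStruc, subst_var', Set.mem_setOf_eq]
  exact hd γ hγ

/-- Antitheorems are closed under substitution. -/
theorem antitheorem_subst {Γ₀ : Set (L.Term Var)} (h : Lg.Antitheorem Γ₀)
    (σ : Var → L.Term Var) : Lg.Antitheorem ((fun t => t.subst σ) '' Γ₀) := by
  intro A _ F hF hne v hsub
  refine h A F hF hne (fun x => (σ x).realize v) ?_
  rintro x ⟨γ, hγ, rfl⟩
  have : (γ.subst σ).realize v ∈ F := hsub ⟨γ.subst σ, ⟨γ, hγ, rfl⟩, rfl⟩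
  rwa [Language.Term.realize_subst] at this

theorem inc_iff_derivAll_subst_antitheorem {Γ₀ : Set (L.Term Var)}
    (h : Lg.Antitheorem Γ₀) (σ : Var → L.Term Var) (Δ : Set (L.Term Var)) :
    Lg.Inc Δ ↔ Lg.DerivAll Δ ((fun t => t.subst σ) '' Γ₀) :=
  ⟨fun hi χ _ => hi χ,
   fun hd => Lg.inc_of_derivAll_antitheorem (Lg.antitheorem_subst h σ) hd⟩

end Logic

end Aux

/-- a κ-ary global (local, parametrized local) DDT together with an
antitheorem (of cardinality at most `|Var|` in the parametrized local case)
yields the κ-ary global (local, parametrized local) IL. -/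
theorem statement_3 {L : FirstOrder.Language.{u, u}} {Var : Type u} (Lg : Logic L Var) (κ : Cardinal.{u})
    (hκ1 : 1 < κ) (hκ2 : κ ≤ Order.succ (Cardinal.mk Var)) :
    ((∃ Φ : GFamD L Var, Lg.GlobalDDT κ Φ) → (∃ Γ, Lg.Antitheorem Γ) →
      ∃ Ψ : GFam L Var, Lg.GlobalIL κ Ψ) ∧
    ((∃ Φ : LFamD L Var, Lg.LocalDDT κ Φ) → (∃ Γ, Lg.Antitheorem Γ) →
      ∃ Ψ : LFam L Var, Lg.LocalIL κ Ψ) ∧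
    ((∃ Φ : PFamD L Var, Lg.ParamLocalDDT κ Φ) →
      (∃ Γ : Set (L.Term Var), Lg.Antitheorem Γ ∧ Cardinal.mk ↥Γ ≤ Cardinal.mk Var) →
      ∃ Ψ : PFam L Var, Lg.ParamLocalIL κ Ψ) := by
  obtain ⟨hκ0⟩ : Nonempty Var := by
    have h1 : (1 : Cardinal.{u}) < Order.succ (Cardinal.mk Var) := lt_of_lt_of_le hκ1 hκ2
    have h2 : (1 : Cardinal.{u}) ≤ Cardinal.mk Var := Order.lt_succ_iff.mp h1
    exact Cardinal.one_le_iff_ne_zero.mp h2 |> fun h => by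
      rw [Cardinal.mk_ne_zero_iff] at h; exact h
  refine ⟨?_, ?_, ?_⟩
  · -- global case
    rintro ⟨Φ, hΦ⟩ ⟨Γ₀, hΓ₀⟩
    refine ⟨fun α => ⋃ γ ∈ Γ₀, ⋃ i₀ : α.ToType,
      (fun t => t.subst (Sum.elim Language.Term.var
        (fun _ => γ.relabel (fun _ : Var => i₀)))) '' (Φ α), ?_⟩
    intro α hα hακ Γ phis
    have hne : Nonempty α.ToType := Ordinal.toType_nonempty_iff_ne_zero.mpr hα.ne'
    have key : ∀ (γ : L.Term Var) (i₀ : α.ToType) (t : L.Term (α.ToType ⊕ PUnit.{u+1})),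
        (t.subst (Sum.elim Language.Term.var
          (fun _ => γ.relabel (fun _ : Var => i₀)))).subst phis
        = t.subst (Sum.elim phis (fun _ => γ.subst (fun _ => phis i₀))) := by
      intro γ i₀ t
      rw [FirstOrder.Language.Term.subst_subst']
      congr 1
      funext x
      cases x with
      | inl i => rfl
      | inr u => exact Logic.subst_relabel' γ _ phis
    constructor
    · intro hInc
      refine ⟨_, rfl, ?_⟩
      rintro χ ⟨u, hu, rfl⟩
      simp only [Set.mem_iUnion] at hu
      obtain ⟨γ, hγ, i₀, t, ht, rfl⟩ := hu
      beta_reduce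
      rw [key]
      have hder : Lg.Deriv (Γ ∪ Set.range phis) (γ.subst (fun _ => phis i₀)) := hInc _
      obtain ⟨I, hI, hd⟩ := (hΦ α hα hακ Γ phis _).mp hder
      rw [Set.mem_singleton_iff] at hI
      subst hI
      exact hd _ ⟨t, ht, rfl⟩
    · rintro ⟨I, hI, hd⟩
      rw [Set.mem_singleton_iff] at hI
      subst hI
      obtain ⟨i₀⟩ := hne
      rw [Lg.inc_iff_derivAll_subst_antitheorem hΓ₀ (fun _ => phis i₀)]
      rintro χ ⟨γ, hγ, rfl⟩
      refine (hΦ α hα hακ Γ phis _).mpr ⟨Φ α, rfl, ?_⟩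
      rintro χ' ⟨t, ht, rfl⟩
      beta_reduce
      rw [← key]
      refine hd _ ⟨_, ?_, rfl⟩
      simp only [Set.mem_iUnion]
      exact ⟨γ, hγ, i₀, t, ht, rfl⟩
  · -- local case
    rintro ⟨Φ, hΦ⟩ ⟨Γ₀, hΓ₀⟩
    classical
    refine ⟨fun α => {S | ∃ i₀ : α.ToType,
        ∃ f : L.Term Var → Set (L.Term (α.ToType ⊕ PUnit.{u+1})),
        (∀ γ ∈ Γ₀, f γ ∈ Φ α) ∧
        S = ⋃ γ ∈ Γ₀, (fun t => t.subst (Sum.elim Language.Term.var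
          (fun _ => γ.relabel (fun _ : Var => i₀)))) '' (f γ)}, ?_⟩
    intro α hα hακ Γ phis
    have hne : Nonempty α.ToType := Ordinal.toType_nonempty_iff_ne_zero.mpr hα.ne'
    obtain ⟨i₀⟩ := hne
    have key : ∀ (γ : L.Term Var) (i₀ : α.ToType) (t : L.Term (α.ToType ⊕ PUnit.{u+1})),
        (t.subst (Sum.elim Language.Term.var
          (fun _ => γ.relabel (fun _ : Var => i₀)))).subst phis
        = t.subst (Sum.elim phis (fun _ => γ.subst (fun _ => phis i₀))) := by
      intro γ i₀ t
      rw [FirstOrder.Language.Term.subst_subst']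
      congr 1
      funext x
      cases x with
      | inl i => rfl
      | inr u => exact Logic.subst_relabel' γ _ phis
    constructor
    · intro hInc
      have hch : ∀ γ ∈ Γ₀, ∃ I ∈ Φ α,
          Lg.DerivAll Γ (Logic.dInst I phis (γ.subst (fun _ => phis i₀))) := by
        intro γ hγ
        exact (hΦ α hα hακ Γ phis _).mp (hInc _)
      choose! f hf1 hf2 using hch
      refine ⟨_, ⟨i₀, f, hf1, rfl⟩, ?_⟩
      rintro χ ⟨u, hu, rfl⟩
      simp only [Set.mem_iUnion] at hu
      obtain ⟨γ, hγ, t, ht, rfl⟩ := hu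
      beta_reduce
      rw [key]
      exact hf2 γ hγ _ ⟨t, ht, rfl⟩
    · rintro ⟨I, ⟨j₀, f, hf, rfl⟩, hd⟩
      rw [Lg.inc_iff_derivAll_subst_antitheorem hΓ₀ (fun _ => phis j₀)]
      rintro χ ⟨γ, hγ, rfl⟩
      refine (hΦ α hα hακ Γ phis _).mpr ⟨f γ, hf γ hγ, ?_⟩
      rintro χ' ⟨t, ht, rfl⟩
      beta_reduce
      rw [← key]
      refine hd _ ⟨_, ?_, rfl⟩
      simp only [Set.mem_iUnion]
      exact ⟨γ, hγ, t, ht, rfl⟩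
  · -- parametrized local case
    rintro ⟨Φ, hΦ⟩ ⟨Γ₀, hΓ₀, -⟩
    classical
    refine ⟨fun α => {S |
        ∃ f : L.Term Var → Set (L.Term (α.ToType ⊕ (PUnit.{u+1} ⊕ Var))),
        ∃ g : L.Term Var → Var → L.Term (α.ToType ⊕ Var),
        (∀ γ ∈ Γ₀, f γ ∈ Φ α) ∧
        S = ⋃ γ ∈ Γ₀, (fun t => t.subst (Sum.elim (Language.Term.var ∘ Sum.inl)
          (Sum.elim (fun _ => γ.relabel Sum.inr) (g γ)))) '' (f γ)}, ?_⟩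
    intro α hα hακ Γ phis
    have key : ∀ (γ : L.Term Var) (g : Var → L.Term (α.ToType ⊕ Var))
        (pis : Var → L.Term Var) (t : L.Term (α.ToType ⊕ (PUnit.{u+1} ⊕ Var))),
        (t.subst (Sum.elim (Language.Term.var ∘ Sum.inl)
          (Sum.elim (fun _ => γ.relabel Sum.inr) g))).subst (Sum.elim phis pis)
        = t.subst (Sum.elim phis (Sum.elim (fun _ => γ.subst pis)
            (fun v => (g v).subst (Sum.elim phis pis)))) := by
      intro γ g pis t
      rw [FirstOrder.Language.Term.subst_subst']
      congr 1
      funext x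
      rcases x with i | u | v
      · rfl
      · exact Logic.subst_relabel' γ _ _
      · rfl
    constructor
    · intro hInc
      have hch : ∀ γ ∈ Γ₀, ∃ I ∈ Φ α, ∃ pis : Var → L.Term Var,
          Lg.DerivAll Γ (Logic.pdInst I phis γ pis) := by
        intro γ hγ
        exact (hΦ α hα hακ Γ phis γ).mp (hInc γ)
      choose! f hf1 p hf2 using hch
      refine ⟨_, ⟨f, fun γ v => (p γ v).relabel Sum.inr, hf1, rfl⟩,
        Language.Term.var, ?_⟩
      rintro χ ⟨u, hu, rfl⟩
      simp only [Set.mem_iUnion] at hu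
      obtain ⟨γ, hγ, t, ht, rfl⟩ := hu
      beta_reduce
      rw [key]
      have he : (Sum.elim phis (Sum.elim
          (fun _ : PUnit.{u+1} => γ.subst Language.Term.var)
          (fun v => (((p γ v).relabel Sum.inr).subst
            (Sum.elim phis Language.Term.var)))))
          = Sum.elim phis (Sum.elim (fun _ => γ) (p γ)) := by
        funext x
        rcases x with i | u | v
        · rfl
        · simp only [Sum.elim_inr, Sum.elim_inl, Logic.subst_var']
        · simp only [Sum.elim_inr, Logic.subst_relabel']
          have : (Sum.elim phis Language.Term.var ∘ Sum.inr : Var → L.Term Var)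
              = Language.Term.var := rfl
          rw [this, Logic.subst_var']
      rw [he]
      exact hf2 γ hγ _ ⟨t, ht, rfl⟩
    · rintro ⟨I, ⟨f, g, hf, rfl⟩, pis, hd⟩
      rw [Lg.inc_iff_derivAll_subst_antitheorem hΓ₀ pis]
      rintro χ ⟨γ, hγ, rfl⟩
      refine (hΦ α hα hακ Γ phis _).mpr
        ⟨f γ, hf γ hγ, fun v => (g γ v).subst (Sum.elim phis pis), ?_⟩
      rintro χ' ⟨t, ht, rfl⟩
      beta_reduce
      rw [← key]
      refine hd _ ⟨_, ?_, rfl⟩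
      simp only [Set.mem_iUnion]
      exact ⟨γ, hγ, t, ht, rfl⟩
end

section
/- Let κ be a regular infinite cardinal. If a κ-compact logic L enjoys the dual local inconsistency lemma with respect to a family Ψ such that |Ψ₁| < κ, then L is a κ-ary logic, i.e., Γ ⊢_L φ implies Γ' ⊢_L φ for some Γ' ⊆ Γ with |Γ'| < κ. -/
set_option linter.unusedVariables false

open FirstOrder Set

universe u

/-- a κ-compact logic with the dual local IL w.r.t. `Ψ` such that
`|Ψ₁| < κ` is κ-ary, for `κ` a regular infinite cardinal. -/
theorem statement_5 {L : FirstOrder.Language.{u, u}} {Var : Type u} (Lg : Logic L Var) (κ : Cardinal.{u})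
    (hreg : κ.IsRegular) (hcomp : Lg.Compact κ)
    (Ψ : LFam L Var) (h : Lg.DualLocalIL 2 Ψ)
    (hcard : Cardinal.mk ↥(Ψ 1) < κ) :
    Lg.Ary κ := by
  intro Γ φ hΓφ
  have hα2 : (1 : Ordinal.{u}) < (2 : Cardinal.{u}).ord := by
    rw [show (2 : Cardinal.{u}) = ((2 : ℕ) : Cardinal) by norm_num, Cardinal.ord_nat]
    exact_mod_cast one_lt_two
  have hne : Nonempty (1 : Ordinal.{u}).ToType :=
    Ordinal.toType_nonempty_iff_ne_zero.mpr one_ne_zero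
  set phis : (1 : Ordinal.{u}).ToType → L.Term Var := fun _ => φ with hphis
  have hIL := h 1 zero_lt_one hα2
  have hfwd : ∀ I ∈ Ψ 1, Lg.Inc (Γ ∪ Logic.lInst I phis) :=
    (hIL Γ phis).mp (fun _ => hΓφ)
  choose Δ hΔsub hΔcard hΔinc using fun I : ↥(Ψ 1) => hcomp _ (hfwd I I.2)
  refine ⟨⋃ I : ↥(Ψ 1), (Δ I ∩ Γ), Set.iUnion_subset fun I => Set.inter_subset_right, ?_, ?_⟩
  · calc Cardinal.mk ↥(⋃ I : ↥(Ψ 1), (Δ I ∩ Γ))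
        ≤ Cardinal.sum (fun I : ↥(Ψ 1) => Cardinal.mk ↥(Δ I ∩ Γ)) :=
          Cardinal.mk_iUnion_le_sum_mk
      _ < κ := Cardinal.sum_lt_of_isRegular hreg hcard (fun I =>
          lt_of_le_of_lt (Cardinal.mk_le_mk_of_subset Set.inter_subset_left) (hΔcard I))
  · have hall : ∀ i, Lg.Deriv (⋃ I : ↥(Ψ 1), (Δ I ∩ Γ)) (phis i) := by
      refine (hIL _ phis).mpr ?_
      intro I hI ψ
      refine Lg.deriv_mono (hΔinc ⟨I, hI⟩ ψ) ?_
      intro x hx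
      rcases hΔsub ⟨I, hI⟩ hx with hxΓ | hxInst
      · exact Or.inl (Set.mem_iUnion.mpr ⟨⟨I, hI⟩, hx, hxΓ⟩)
      · exact Or.inr hxInst
    exact hall hne.some
end

section
/- Let L be a logic which enjoys the κ-ary parametrized local IL with respect to a family Ψ. If L enjoys the dual parametrized local IL with respect to some family, then L enjoys the κ-ary dual parametrized local IL with respect to Ψ itself, and hence the κ-ary classical parametrized local IL with respect to Ψ. -/
set_option linter.unusedVariables false

open FirstOrder Set

universe u

/-- a κ-ary parametrized local IL w.r.t. `Ψ` together with a dual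
parametrized local IL w.r.t. some family yields the κ-ary dual (hence classical)
parametrized local IL w.r.t. `Ψ` itself. -/
theorem statement_6 {L : FirstOrder.Language.{u, u}} {Var : Type u} (Lg : Logic L Var) (κ : Cardinal.{u})
    (hκ1 : 1 < κ) (hκ2 : κ ≤ Order.succ (Cardinal.mk Var))
    (Ψ : PFam L Var) (h : Lg.ParamLocalIL κ Ψ)
    (hdual : ∃ Ψ' : PFam L Var, Lg.DualParamLocalIL 2 Ψ') :
    Lg.DualParamLocalIL κ Ψ ∧ Lg.ClassicalParamLocalIL κ Ψ := by
  obtain ⟨Ψ', hΨ'⟩ := hdual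
  have hmem : ∀ (Γ : Set (L.Term Var)) (φ : L.Term Var), φ ∈ Γ → Lg.Deriv Γ φ := by
    intro Γ φ hφ
    exact Lg.deriv_mono (Lg.deriv_refl φ) (Set.singleton_subset_iff.mpr hφ)
  have hIncMono : ∀ {Γ Δ : Set (L.Term Var)}, Lg.Inc Γ → Γ ⊆ Δ → Lg.Inc Δ := by
    intro Γ Δ hΓ hsub ψ
    exact Lg.deriv_mono (hΓ ψ) hsub
  have hdualκ : Lg.DualParamLocalIL κ Ψ := by
    intro α hα0 hακ Γ phis
    constructor
    · -- forward: uses only the IL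
      intro hder I hI pis
      have h1 : Lg.Inc ((Γ ∪ Logic.pInst I phis pis) ∪ range phis) := by
        rw [h α hα0 hακ (Γ ∪ Logic.pInst I phis pis) phis]
        exact ⟨I, hI, pis, fun ψ hψ => hmem _ ψ (Or.inr hψ)⟩
      intro ψ
      refine Lg.deriv_cut ?_ (h1 ψ)
      rintro χ (hχ | ⟨i, rfl⟩)
      · exact hmem _ χ hχ
      · exact Lg.deriv_mono (hder i) Set.subset_union_left
    · -- backward: uses the 2-ary dual IL
      intro hinc i
      have h10 : (0 : Ordinal.{u}) < 1 := zero_lt_one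
      have h12 : (1 : Ordinal.{u}) < (2 : Cardinal.{u}).ord := by
        rw [Cardinal.lt_ord]
        simp
      set phis' : (1 : Ordinal.{u}).ToType → L.Term Var := fun _ => phis i with hphis'
      have hdual1 := hΨ' 1 h10 h12
      have hne : Nonempty ((1 : Ordinal.{u}).ToType) :=
        Ordinal.nonempty_toType_iff.mpr one_ne_zero
      have key : ∀ I' ∈ Ψ' 1, ∀ pis' : Var → L.Term Var,
          Lg.Inc (Γ ∪ Logic.pInst I' phis' pis') := by
        intro I' hI' pis'
        -- {φᵢ} ∪ I'(φᵢ, π̄') is inconsistent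
        have hA : Lg.Inc ({phis i} ∪ Logic.pInst I' phis' pis') := by
          have := (hdual1 {phis i} phis').mp (fun _ => Lg.deriv_refl (phis i))
          exact this I' hI' pis'
        -- hence (Γ ∪ Δ') ∪ range phis is inconsistent
        have hB : Lg.Inc ((Γ ∪ Logic.pInst I' phis' pis') ∪ range phis) := by
          refine hIncMono hA ?_
          rintro χ (hχ | hχ)
          · exact Or.inr ⟨i, hχ.symm⟩
          · exact Or.inl (Or.inr hχ)
        obtain ⟨I, hI, pis, hDA⟩ := (h α hα0 hακ (Γ ∪ Logic.pInst I' phis' pis') phis).mp hB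
        have hC := hinc I hI pis
        intro ψ
        refine Lg.deriv_cut ?_ (hC ψ)
        rintro χ (hχ | hχ)
        · exact hmem _ χ (Or.inl hχ)
        · exact hDA χ hχ
      exact (hdual1 Γ phis').mpr key hne.some
  exact ⟨hdualκ, h, hdualκ⟩
end

section
/- Let L be a logic which enjoys the classical (κ+λ)-ary local IL with respect to a family Ψ such that each set in Ψ₁ has cardinality less than λ+1. Then L enjoys the κ-ary local DDT. If moreover the classical IL is global (each Ψ_α a singleton), then L enjoys the κ-ary global DDT. -/
set_option linter.unusedVariables false

open FirstOrder Set

universe u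

namespace Statement7Aux

variable {L : FirstOrder.Language.{u, u}} {Var : Type u}

/-- The ordinal indexing the combined tuple `φ̄ ⌢ J(ψ)`. -/
noncomputable def gam (α : Ordinal.{u}) (J : Set (L.Term (1 : Ordinal.{u}).ToType)) :
    Ordinal.{u} :=
  (Cardinal.mk (α.ToType ⊕ ↥J)).ord

/-- An enumeration of `α.ToType ⊕ J` by `gam α J`. -/
noncomputable def eqv (α : Ordinal.{u}) (J : Set (L.Term (1 : Ordinal.{u}).ToType)) :
    (gam α J).ToType ≃ (α.ToType ⊕ ↥J) :=
  Classical.choice (Cardinal.eq.mp (by rw [gam, Cardinal.mk_ord_toType]))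

/-- The template substitution turning a formula over `gam α J` slots into a formula
over `α.ToType ⊕ PUnit`. -/
noncomputable def sig (α : Ordinal.{u}) (J : Set (L.Term (1 : Ordinal.{u}).ToType)) :
    (gam α J).ToType → L.Term (α.ToType ⊕ PUnit.{u + 1}) :=
  fun x => Sum.elim (fun a => Language.Term.var (Sum.inl a))
    (fun t : ↥J =>
      (t : L.Term (1 : Ordinal.{u}).ToType).subst
        (fun _ => Language.Term.var (Sum.inr PUnit.unit)))
    (eqv α J x)

/-- The combined tuple `φ̄ ⌢ J(ψ)`. -/
noncomputable def chi (α : Ordinal.{u}) (J : Set (L.Term (1 : Ordinal.{u}).ToType))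
    (phis : α.ToType → L.Term Var) (ψ : L.Term Var) :
    (gam α J).ToType → L.Term Var :=
  fun x => Sum.elim phis
    (fun t : ↥J => (t : L.Term (1 : Ordinal.{u}).ToType).subst (fun _ => ψ))
    (eqv α J x)

theorem sig_subst (α : Ordinal.{u}) (J : Set (L.Term (1 : Ordinal.{u}).ToType))
    (phis : α.ToType → L.Term Var) (ψ : L.Term Var) :
    (fun x => (sig α J x).subst (Sum.elim phis (fun _ => ψ))) = chi α J phis ψ := by
  funext x
  unfold sig chi
  rcases hx : eqv α J x with a | t
  · rfl
  · simp only [Sum.elim_inr]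
    rw [FirstOrder.Language.Term.subst_subst']
    rfl

theorem range_chi (α : Ordinal.{u}) (J : Set (L.Term (1 : Ordinal.{u}).ToType))
    (phis : α.ToType → L.Term Var) (ψ : L.Term Var) :
    range (chi α J phis ψ) =
      range phis ∪ Logic.lInst J (fun _ => ψ) := by
  have h1 : chi α J phis ψ =
      (Sum.elim phis
        (fun t : ↥J => (t : L.Term (1 : Ordinal.{u}).ToType).subst (fun _ => ψ))) ∘
        (eqv α J) := rfl
  rw [h1, Function.Surjective.range_comp (eqv α J).surjective, Sum.elim_range,
    Logic.lInst, image_eq_range]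

theorem dInst_image (α : Ordinal.{u}) (J : Set (L.Term (1 : Ordinal.{u}).ToType))
    (I : Set (L.Term (gam (L := L) α J).ToType))
    (phis : α.ToType → L.Term Var) (ψ : L.Term Var) :
    Logic.dInst ((fun t => t.subst (sig α J)) '' I) phis ψ =
      Logic.lInst I (chi α J phis ψ) := by
  unfold Logic.dInst Logic.lInst
  rw [image_image]
  simp only [FirstOrder.Language.Term.subst_subst', sig_subst]

theorem aux_add_lt {a b κ μ : Cardinal.{u}} (hκ : 1 ≤ κ) (ha : a < κ) (hb : b < μ + 1) :
    a + b < κ + μ := by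
  rcases le_or_gt Cardinal.aleph0 (κ + μ) with hinf | hfin
  · have hμκ : μ + 1 ≤ κ + μ := by
      rw [add_comm κ μ]
      exact add_le_add_right hκ μ
    exact Cardinal.add_lt_of_lt hinf (ha.trans_le le_self_add) (hb.trans_le hμκ)
  · have hκf : κ < Cardinal.aleph0 := le_self_add.trans_lt hfin
    have hμf : μ < Cardinal.aleph0 := le_add_self.trans_lt hfin
    have haf : a < Cardinal.aleph0 := ha.trans hκf
    have hbf : b < Cardinal.aleph0 :=
      hb.trans (Cardinal.add_lt_aleph0 hμf Cardinal.one_lt_aleph0)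
    lift κ to ℕ using hκf
    lift μ to ℕ using hμf
    lift a to ℕ using haf
    lift b to ℕ using hbf
    have h1 : a < κ := by exact_mod_cast ha
    have h2 : b < μ + 1 := by exact_mod_cast hb
    have h3 : a + b < κ + μ := by omega
    exact_mod_cast h3

/-- The DDT family constructed from the IL family. -/
noncomputable def PhiFam (Var : Type u) (Ψ : LFam L Var) : LFamD L Var := fun α =>
  (fun f : (J : ↥(Ψ 1)) → Set (L.Term (gam (L := L) α J.1).ToType) =>
      ⋃ J : ↥(Ψ 1), (fun t => t.subst (sig α J.1)) '' f J) ''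
    {f | ∀ J : ↥(Ψ 1), f J ∈ Ψ (gam (L := L) α J.1)}

end Statement7Aux

/-- the classical (κ+λ)-ary local IL w.r.t. `Ψ`, with each set in
`Ψ₁` of cardinality less than `λ+1`, yields the κ-ary local DDT; if the IL is
moreover global, it yields the κ-ary global DDT. -/
theorem statement_7 {L : FirstOrder.Language.{u, u}} {Var : Type u} (Lg : Logic L Var) (κ μ : Cardinal.{u})
    (hκ1 : 1 < κ + μ) (hκ2 : κ + μ ≤ Order.succ (Cardinal.mk Var))
    (Ψ : LFam L Var) (h : Lg.ClassicalLocalIL (κ + μ) Ψ)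
    (hcard : ∀ I ∈ Ψ 1, Cardinal.mk ↥I < μ + 1) :
    (∃ Φ : LFamD L Var, Lg.LocalDDT κ Φ) ∧
    ((∀ α : Ordinal.{u}, 0 < α → α < (κ + μ).ord → ∃ I, Ψ α = {I}) →
      ∃ Φ : GFamD L Var, Lg.GlobalDDT κ Φ) := by
  classical
  open Statement7Aux in
  -- guards for the combined tuples
  have hguard : ∀ (α : Ordinal.{u}), 0 < α → α < κ.ord → ∀ J : ↥(Ψ 1),
      0 < gam (L := L) α J.1 ∧ gam (L := L) α J.1 < (κ + μ).ord := by
    intro α hα0 hακ J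
    have hx : Nonempty α.ToType := Ordinal.toType_nonempty_iff_ne_zero.mpr hα0.ne'
    have hcardα : α.card < κ := Cardinal.lt_ord.mp hακ
    have h1α : (1 : Cardinal) ≤ α.card := by
      have := Ordinal.card_le_card (Order.one_le_iff_pos.mpr hα0)
      simpa using this
    have hκle : (1 : Cardinal) ≤ κ := h1α.trans hcardα.le
    constructor
    · rw [gam]
      refine Cardinal.lt_ord.mpr ?_
      have : (Cardinal.mk (α.ToType ⊕ ↥J.1)) ≠ 0 :=
        Cardinal.mk_ne_zero_iff.mpr ⟨Sum.inl hx.some⟩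
      simpa using pos_iff_ne_zero.mpr this
    · rw [gam]
      refine Cardinal.lt_ord.mpr ?_
      rw [Cardinal.card_ord]
      have hm : Cardinal.mk (α.ToType ⊕ ↥J.1) =
          α.card + Cardinal.mk ↥J.1 := by
        simp [Cardinal.mk_sum, Cardinal.mk_toType]
      rw [hm]
      exact aux_add_lt hκle hcardα (hcard _ J.2)
  have h1ord : (1 : Ordinal.{u}) < (κ + μ).ord := by
    refine Cardinal.lt_ord.mpr ?_
    simpa using hκ1
  have hone : Nonempty (1 : Ordinal.{u}).ToType :=
    Ordinal.toType_nonempty_iff_ne_zero.mpr one_ne_zero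
  -- DerivAll over unions
  have hAll : ∀ (Γ : Set (L.Term Var)) (A : ↥(Ψ 1) → Set (L.Term Var)),
      Lg.DerivAll Γ (⋃ J, A J) ↔ ∀ J, Lg.DerivAll Γ (A J) := by
    intro Γ A
    constructor
    · intro hh J φ hφ
      exact hh φ (mem_iUnion.mpr ⟨J, hφ⟩)
    · intro hh φ hφ
      obtain ⟨J, hJ⟩ := mem_iUnion.mp hφ
      exact hh J φ hJ
  -- instantiating an element of the constructed family
  have hbig : ∀ (α : Ordinal.{u})
      (f : (J : ↥(Ψ 1)) → Set (L.Term (gam (L := L) α J.1).ToType))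
      (phis : α.ToType → L.Term Var) (ψ : L.Term Var),
      Logic.dInst (⋃ J : ↥(Ψ 1), (fun t => t.subst (sig α J.1)) '' f J) phis ψ =
        ⋃ J : ↥(Ψ 1), Logic.lInst (f J) (chi α J.1 phis ψ) := by
    intro α f phis ψ
    unfold Logic.dInst
    rw [image_iUnion]
    exact iUnion_congr fun J => dInst_image α J.1 (f J) phis ψ
  have hDDT : Lg.LocalDDT κ (PhiFam Var Ψ) := by
    intro α hα0 hακ Γ phis ψ
    have hdual := h.2 1 zero_lt_one h1ord (Γ ∪ range phis) (fun _ => ψ)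
    constructor
    · intro hd
      have hinc : ∀ J ∈ Ψ 1,
          Lg.Inc ((Γ ∪ range phis) ∪ Logic.lInst J (fun _ => ψ)) :=
        hdual.mp (fun _ => hd)
      have hIs : ∀ J : ↥(Ψ 1), ∃ I ∈ Ψ (gam (L := L) α J.1),
          Lg.DerivAll Γ (Logic.lInst I (chi α J.1 phis ψ)) := by
        intro J
        have hincJ : Lg.Inc (Γ ∪ range (chi α J.1 phis ψ)) := by
          rw [range_chi, ← union_assoc]
          exact hinc _ J.2
        exact (h.1 (gam (L := L) α J.1) (hguard α hα0 hακ J).1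
          (hguard α hα0 hακ J).2 Γ (chi α J.1 phis ψ)).mp hincJ
      choose f hf1 hf2 using hIs
      refine ⟨⋃ J : ↥(Ψ 1), (fun t => t.subst (sig α J.1)) '' f J,
        ⟨f, hf1, rfl⟩, ?_⟩
      rw [hbig α f phis ψ]
      exact (hAll Γ _).mpr hf2
    · rintro ⟨S, ⟨f, hf, rfl⟩, hder⟩
      rw [hbig α f phis ψ] at hder
      have hJd := (hAll Γ _).mp hder
      have hincs : ∀ J ∈ Ψ 1,
          Lg.Inc ((Γ ∪ range phis) ∪ Logic.lInst J (fun _ => ψ)) := by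
        intro J hJ
        have := (h.1 (gam (L := L) α J) (hguard α hα0 hακ ⟨J, hJ⟩).1
          (hguard α hα0 hακ ⟨J, hJ⟩).2 Γ (chi α J phis ψ)).mpr
          ⟨f ⟨J, hJ⟩, hf ⟨J, hJ⟩, hJd ⟨J, hJ⟩⟩
        rwa [range_chi, ← union_assoc] at this
      exact (hdual.mpr hincs) hone.some
  refine ⟨⟨PhiFam Var Ψ, hDDT⟩, ?_⟩
  intro hsing
  refine ⟨fun α => ⋃₀ (PhiFam Var Ψ α), ?_⟩
  intro α hα0 hακ Γ phis ψ
  have hsingle : ∃ S, PhiFam Var Ψ α = {S} := by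
    choose Isel hIsel using fun (J : ↥(Ψ 1)) =>
      hsing (gam (L := L) α J.1) (hguard α hα0 hακ J).1 (hguard α hα0 hακ J).2
    refine ⟨⋃ J : ↥(Ψ 1), (fun t => t.subst (sig α J.1)) '' Isel J, ?_⟩
    ext S
    simp only [PhiFam, mem_image, mem_setOf_eq, mem_singleton_iff]
    constructor
    · rintro ⟨f, hf, rfl⟩
      have hfe : f = Isel := by
        funext J
        have := hf J
        rwa [hIsel J, mem_singleton_iff] at this
      rw [hfe]
    · rintro rfl
      exact ⟨Isel, fun J => by rw [hIsel J]; exact rfl, rfl⟩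
  obtain ⟨S, hS⟩ := hsingle
  have hkey : ({⋃₀ (PhiFam Var Ψ α)} : Set (Set (L.Term (α.ToType ⊕ PUnit.{u + 1})))) =
      PhiFam Var Ψ α := by
    rw [hS, sUnion_singleton]
  have hd := hDDT α hα0 hακ Γ phis ψ
  rw [hS] at hd
  simpa only [hS, sUnion_singleton] using hd
end

section
/- A logic L enjoys the κ-ary dual parametrized local IL with respect to a family Ψ if and only if L enjoys the κ-ary parametrized local law of the excluded middle with respect to Ψ. -/
set_option linter.unusedVariables false

open FirstOrder Set

universe u

/-- Auxiliary: membership implies derivability. -/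
theorem Logic.deriv_of_mem {L : FirstOrder.Language.{u, u}} {Var : Type u} (Lg : Logic L Var)
    {Γ : Set (L.Term Var)} {φ : L.Term Var} (h : φ ∈ Γ) : Lg.Deriv Γ φ :=
  Lg.deriv_mono (Lg.deriv_refl φ) (Set.singleton_subset_iff.mpr h)

/-- the κ-ary dual parametrized local IL w.r.t. `Ψ` is equivalent
to the κ-ary parametrized local LEM w.r.t. `Ψ`. -/
theorem statement_10 {L : FirstOrder.Language.{u, u}} {Var : Type u} (Lg : Logic L Var) (κ : Cardinal.{u})
    (hκ1 : 1 < κ) (hκ2 : κ ≤ Order.succ (Cardinal.mk Var))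
    (Ψ : PFam L Var) :
    Lg.DualParamLocalIL κ Ψ ↔ Lg.ParamLocalLEM κ Ψ := by
  constructor
  · intro hD
    have hLEMi : ∀ α : Ordinal.{u}, 0 < α → α < κ.ord → ∀ I ∈ Ψ α,
        ∀ (phis : α.ToType → L.Term Var) (pis : Var → L.Term Var),
          Lg.Inc (range phis ∪ Logic.pInst I phis pis) := by
      intro α hα0 hακ I hI phis pis
      exact (hD α hα0 hακ (range phis) phis).mp
        (fun i => Lg.deriv_of_mem (mem_range_self i)) I hI pis
    refine ⟨hLEMi, ?_⟩
    intro α hα0 hακ Γ phis ψ h1 h2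
    set ψb : α.ToType → L.Term Var := fun _ => ψ with hψb
    have key : ∀ I₀ ∈ Ψ α, ∀ pis₀ : Var → L.Term Var,
        Lg.Inc (Γ ∪ Logic.pInst I₀ ψb pis₀) := by
      intro I₀ hI₀ pis₀
      set Δ := Γ ∪ Logic.pInst I₀ ψb pis₀ with hΔ
      have hsubΓΔ : Γ ⊆ Δ := subset_union_left
      have hΔφ : ∀ i, Lg.Deriv Δ (phis i) := by
        refine (hD α hα0 hακ Δ phis).mpr ?_
        intro I hI pis χ
        have hψ : Lg.Deriv (Δ ∪ Logic.pInst I phis pis) ψ :=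
          Lg.deriv_mono (h2 I hI pis) (union_subset_union_left _ hsubΓΔ)
        refine Lg.deriv_cut ?_ (hLEMi α hα0 hακ I₀ hI₀ ψb pis₀ χ)
        intro θ hθ
        rcases hθ with ⟨i, rfl⟩ | hθ
        · exact hψ
        · exact Lg.deriv_of_mem (Or.inl (Or.inr hθ))
      have hΔψ : Lg.Deriv Δ ψ := by
        refine Lg.deriv_cut ?_ h1
        intro θ hθ
        rcases hθ with hθ | ⟨i, rfl⟩
        · exact Lg.deriv_of_mem (Or.inl hθ)
        · exact hΔφ i
      intro χ
      refine Lg.deriv_cut ?_ (hLEMi α hα0 hακ I₀ hI₀ ψb pis₀ χ)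
      intro θ hθ
      rcases hθ with ⟨i, rfl⟩ | hθ
      · exact hΔψ
      · exact Lg.deriv_of_mem (Or.inr hθ)
    have hne : Nonempty α.ToType := Ordinal.toType_nonempty_iff_ne_zero.mpr hα0.ne'
    obtain ⟨i₀⟩ := hne
    exact ((hD α hα0 hακ Γ ψb).mpr key) i₀
  · rintro ⟨hL1, hL2⟩ α hα0 hακ Γ phis
    constructor
    · intro hφ I hI pis χ
      refine Lg.deriv_cut ?_ (hL1 α hα0 hακ I hI phis pis χ)
      intro θ hθ
      rcases hθ with ⟨i, rfl⟩ | hθ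
      · exact Lg.deriv_mono (hφ i) subset_union_left
      · exact Lg.deriv_of_mem (Or.inr hθ)
    · intro hInc i
      refine hL2 α hα0 hακ Γ phis (phis i) ?_ ?_
      · exact Lg.deriv_of_mem (Or.inr ⟨i, rfl⟩)
      · intro I hI pis
        exact hInc I hI pis (phis i)
end

section
/- Every coatomic logic which enjoys the dual parametrized local IL (with respect to some family) is semisimple. -/
set_option linter.unusedVariables false

open FirstOrder Set

universe u

/-- every coatomic logic with the dual parametrized local IL
(w.r.t. some family) is semisimple. -/
theorem statement_11 {L : FirstOrder.Language.{u, u}} {Var : Type u} (Lg : Logic L Var) (hco : Lg.Coatomic)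
    (h : ∃ Ψ : PFam L Var, Lg.DualParamLocalIL 2 Ψ) :
    Lg.Semisimple := by
  intro T hT
  refine ⟨{U | Lg.IsSimple U ∧ T ⊆ U}, fun U hU => hU.1, ?_⟩
  obtain ⟨Ψ, hΨ⟩ := h
  apply Set.Subset.antisymm
  · exact fun φ hφ => Set.mem_sInter.2 fun U hU => hU.2 hφ
  · intro φ hφ
    by_contra hφT
    have h1 : (0:Ordinal.{u}) < 1 := zero_lt_one
    have h2 : (1:Ordinal.{u}) < (2:Cardinal.{u}).ord := by
      have he : (2:Cardinal.{u}).ord = 2 := by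
        rw [show (2:Cardinal.{u}) = ((2:ℕ):Cardinal) by norm_cast, Cardinal.ord_nat]
        norm_cast
      rw [he]; exact one_lt_two
    have hne : Nonempty ((1:Ordinal.{u}).ToType) := by
      rw [Ordinal.toType_nonempty_iff_ne_zero]; exact one_ne_zero
    obtain ⟨i0⟩ := hne
    set phis : (1:Ordinal.{u}).ToType → L.Term Var := fun _ => φ with hphis
    have hilT := hΨ 1 h1 h2 T phis
    have hnd : ¬ ∀ i, Lg.Deriv T (phis i) := fun hd => hφT (hT φ (hd i0))
    rw [hilT] at hnd
    push_neg at hnd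
    obtain ⟨I, hI, pis, hninc⟩ := hnd
    set Γ := T ∪ Logic.pInst I phis pis with hΓ
    set T' := {ψ | Lg.Deriv Γ ψ} with hT'def
    have hT'th : Lg.IsTheory T' := fun ψ hψ => Lg.deriv_cut (fun χ hχ => hχ) hψ
    have hT'ne : T' ≠ univ := by
      intro he
      exact hninc fun ψ => show ψ ∈ T' from he ▸ mem_univ ψ
    obtain ⟨U, hUs, hTU'⟩ := hco T' hT'th hT'ne
    have hΓU : Γ ⊆ U := fun χ hχ =>
      hTU' (Lg.deriv_mono (Lg.deriv_refl χ) (singleton_subset_iff.2 hχ))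
    have hTU : T ⊆ U := fun χ hχ => hΓU (Or.inl hχ)
    have hφU : φ ∈ U := Set.mem_sInter.1 hφ U ⟨hUs, hTU⟩
    have hdU : ∀ i, Lg.Deriv U (phis i) := fun i =>
      Lg.deriv_mono (Lg.deriv_refl φ) (singleton_subset_iff.2 hφU)
    have hincU := (hΨ 1 h1 h2 U phis).1 hdU I hI pis
    have hUeq : U ∪ Logic.pInst I phis pis = U :=
      union_eq_self_of_subset_right (fun χ hχ => hΓU (Or.inr hχ))
    rw [hUeq] at hincU
    apply hUs.2.1
    ext ψ
    simp only [mem_univ, iff_true]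
    exact hUs.1 ψ (hincU ψ)
end

section
/- If a logic L enjoys the κ-ary simple parametrized local IL with respect to a family Ψ, then for every semisimple theory T of L and every α-tuple of formulas φ̄ (0 < α < κ): if T ∪ I(φ̄, π̄) ⊢_L Fm for every I ∈ Ψ_α and every tuple π̄, then T ⊢_L φᵢ for every φᵢ in φ̄. -/
set_option linter.unusedVariables false

open FirstOrder Set

universe u

/-- the simple parametrized local IL extends from simple to
semisimple theories (in its dual form). -/
theorem statement_12 {L : FirstOrder.Language.{u, u}} {Var : Type u} (Lg : Logic L Var) (κ : Cardinal.{u})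
    (hκ1 : 1 < κ) (hκ2 : κ ≤ Order.succ (Cardinal.mk Var))
    (Ψ : PFam L Var) (h : Lg.SimpleParamLocalIL κ Ψ) :
    ∀ T : Set (L.Term Var), Lg.IsSemisimple T →
      ∀ α : Ordinal.{u}, 0 < α → α < κ.ord →
        ∀ phis : α.ToType → L.Term Var,
          (∀ I ∈ Ψ α, ∀ pis : Var → L.Term Var, Lg.Inc (T ∪ Logic.pInst I phis pis)) →
          ∀ i, Lg.Deriv T (phis i) := by
  rintro T ⟨S, hS, rfl⟩ α hα1 hα2 phis hinc i
  have hmem : ∀ U ∈ S, phis i ∈ U := by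
    intro U hU
    obtain ⟨hUth, hUnt, hUmax⟩ := hS U hU
    by_contra hni
    set T' : Set (L.Term Var) := {ψ | Lg.Deriv (U ∪ {phis i}) ψ} with hT'def
    have hT'th : Lg.IsTheory T' := fun ψ hψ => Lg.deriv_cut (fun χ hχ => hχ) hψ
    have hmemT' : phis i ∈ T' :=
      Lg.deriv_mono (Lg.deriv_refl _) (by intro x hx; right; exact hx)
    have hsub : U ⊆ T' := fun ψ hψ =>
      Lg.deriv_mono (Lg.deriv_refl ψ)
        (by intro x hx; left; rw [Set.mem_singleton_iff] at hx; exact hx ▸ hψ)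
    have hT'triv : T' = univ := by
      by_contra hnt
      exact hni ((hUmax T' hT'th hnt hsub) ▸ hmemT')
    have hIncU : Lg.Inc (U ∪ range phis) := by
      intro ψ
      have hψ : ψ ∈ T' := hT'triv ▸ mem_univ ψ
      refine Lg.deriv_mono hψ (union_subset_union_right U ?_)
      intro x hx; rw [Set.mem_singleton_iff] at hx; exact hx ▸ ⟨i, rfl⟩
    obtain ⟨I, hI, pis, hDA⟩ := h.2 α hα1 hα2 U ⟨hUth, hUnt, hUmax⟩ phis hIncU
    have hsubI : Logic.pInst I phis pis ⊆ U := fun x hx => hUth x (hDA x hx)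
    have hIncTU := hinc I hI pis
    have hIncU' : Lg.Inc U := fun ψ =>
      Lg.deriv_mono (hIncTU ψ) (union_subset (sInter_subset_of_mem hU) hsubI)
    exact hUnt (eq_univ_of_forall (fun ψ => hUth ψ (hIncU' ψ)))
  have : phis i ∈ ⋂₀ S := fun U hU => hmem U hU
  exact Lg.deriv_mono (Lg.deriv_refl _)
    (by intro x hx; rw [Set.mem_singleton_iff] at hx; exact hx ▸ this)
end

section
/- Let L be a coatomic logic which enjoys the simple local IL with respect to a family Ψ. Then the following are equivalent: (1) L is semisimple; (2) L enjoys the local LEM with respect to some family; (3) L enjoys the dual local IL with respect to some family; (4) L enjoys the local LEM with respect to Ψ; (5) L enjoys the dual local IL with respect to Ψ. The same equivalence holds with 'parametrized local' in place of 'local' throughout, assuming the simple parametrized local IL with respect to Ψ. -/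
set_option linter.unusedVariables false

open FirstOrder Set

universe u

namespace Logic

variable {L : FirstOrder.Language.{u, u}} {Var : Type u} (Lg : Logic L Var)

lemma deriv_mem {Γ : Set (L.Term Var)} {φ : L.Term Var} (h : φ ∈ Γ) : Lg.Deriv Γ φ :=
  Lg.deriv_mono (Lg.deriv_refl φ) (Set.singleton_subset_iff.2 h)

lemma thy_isTheory (Γ : Set (L.Term Var)) : Lg.IsTheory {φ | Lg.Deriv Γ φ} :=
  fun _ h => Lg.deriv_cut (fun _ hψ => hψ) h

lemma simple_not_inc {U : Set (L.Term Var)} (hU : Lg.IsSimple U) : ¬ Lg.Inc U :=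
  fun h => hU.2.1 (Set.eq_univ_of_forall fun χ => hU.1 χ (h χ))

lemma simple_absorb {U Δ : Set (L.Term Var)} (hU : Lg.IsSimple U)
    (h : ¬ Lg.Inc (U ∪ Δ)) : Δ ⊆ U := by
  have hthy := Lg.thy_isTheory (U ∪ Δ)
  have hne : {φ | Lg.Deriv (U ∪ Δ) φ} ≠ Set.univ := by
    intro he
    refine h fun χ => ?_
    have : χ ∈ {φ | Lg.Deriv (U ∪ Δ) φ} := by rw [he]; trivial
    exact this
  have hsub : U ⊆ {φ | Lg.Deriv (U ∪ Δ) φ} := fun χ hχ => Lg.deriv_mem (Or.inl hχ)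
  have heq := hU.2.2 _ hthy hne hsub
  intro χ hχ
  rw [← heq]
  exact Lg.deriv_mem (Or.inr hχ)

lemma deriv_of_simple (hss : Lg.Semisimple) {Γ : Set (L.Term Var)} {ψ : L.Term Var}
    (h : ∀ U, Lg.IsSimple U → Γ ⊆ U → ψ ∈ U) : Lg.Deriv Γ ψ := by
  obtain ⟨S, hS, hEq⟩ := hss _ (Lg.thy_isTheory Γ)
  have hmem : ψ ∈ ⋂₀ S := by
    intro U hU
    refine h U (hS U hU) fun χ hχ => ?_
    have hχ' : χ ∈ {φ | Lg.Deriv Γ φ} := Lg.deriv_mem hχ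
    rw [hEq] at hχ'
    exact hχ' U hU
  rw [← hEq] at hmem
  exact hmem

section Aux

variable {Lg}

lemma aux_ord1 : (1 : Ordinal.{u}) < (2 : Cardinal.{u}).ord := Cardinal.lt_ord.mpr (by simp)

lemma aux_ne1 : Nonempty (1 : Ordinal.{u}).ToType := by
  rw [Ordinal.nonempty_toType_iff]; exact one_ne_zero

lemma localLEM_of_semisimple {Ψ : LFam L Var} (hs : Lg.SimpleLocalIL 2 Ψ)
    (hss : Lg.Semisimple) : Lg.LocalLEM 2 Ψ := by
  refine ⟨hs.1, ?_⟩
  intro α hα hκ Γ phis ψ h1 h2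
  refine Lg.deriv_of_simple hss fun U hU hΓU => ?_
  by_cases hinc : Lg.Inc (U ∪ Set.range phis)
  · obtain ⟨I, hI, hd⟩ := hs.2 α hα hκ U hU phis hinc
    refine hU.1 ψ (Lg.deriv_cut (Φ := Γ ∪ lInst I phis) ?_ (h2 I hI))
    rintro ρ (hρ | hρ)
    · exact Lg.deriv_mem (hΓU hρ)
    · exact hd ρ hρ
  · have hsub := Lg.simple_absorb hU hinc
    refine hU.1 ψ (Lg.deriv_cut (Φ := Γ ∪ Set.range phis) ?_ h1)
    rintro ρ (hρ | hρ)
    · exact Lg.deriv_mem (hΓU hρ)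
    · exact Lg.deriv_mem (hsub hρ)

lemma dualLocalIL_of_semisimple {Ψ : LFam L Var} (hs : Lg.SimpleLocalIL 2 Ψ)
    (hss : Lg.Semisimple) : Lg.DualLocalIL 2 Ψ := by
  intro α hα hκ Γ phis
  constructor
  · intro h I hI χ
    refine Lg.deriv_cut (Φ := Set.range phis ∪ lInst I phis) ?_ (hs.1 α hα hκ I hI phis χ)
    rintro ρ (⟨i, rfl⟩ | hρ)
    · exact Lg.deriv_mono (h i) Set.subset_union_left
    · exact Lg.deriv_mem (Or.inr hρ)
  · intro h i
    refine Lg.deriv_of_simple hss fun U hU hΓU => ?_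
    by_cases hinc : Lg.Inc (U ∪ Set.range phis)
    · exfalso
      obtain ⟨I, hI, hd⟩ := hs.2 α hα hκ U hU phis hinc
      apply Lg.simple_not_inc hU
      intro χ
      refine Lg.deriv_cut (Φ := Γ ∪ lInst I phis) ?_ (h I hI χ)
      rintro ρ (hρ | hρ)
      · exact Lg.deriv_mem (hΓU hρ)
      · exact hd ρ hρ
    · exact Lg.simple_absorb hU hinc ⟨i, rfl⟩

lemma semisimple_of_localLEM (hco : Lg.Coatomic) {Ψ' : LFam L Var}
    (hlem : Lg.LocalLEM 2 Ψ') : Lg.Semisimple := by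
  intro T hT
  by_cases htriv : T = Set.univ
  · exact ⟨∅, by simp, by simp [htriv]⟩
  · refine ⟨{U | Lg.IsSimple U ∧ T ⊆ U}, fun U hU => hU.1, ?_⟩
    refine Set.Subset.antisymm (Set.subset_sInter fun U hU => hU.2) ?_
    intro ψ hψ
    by_contra hψT
    have hα : (0 : Ordinal.{u}) < 1 := zero_lt_one
    haveI : Nonempty (1 : Ordinal.{u}).ToType := aux_ne1
    set phis : (1 : Ordinal.{u}).ToType → L.Term Var := fun _ => ψ with hphis
    have hψnd : ¬ Lg.Deriv T ψ := fun h => hψT (hT ψ h)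
    have h1 : Lg.Deriv (T ∪ Set.range phis) ψ :=
      Lg.deriv_mem (Or.inr ⟨Classical.arbitrary _, rfl⟩)
    obtain ⟨I, hI, hnd⟩ : ∃ I ∈ Ψ' 1, ¬ Lg.Deriv (T ∪ lInst I phis) ψ := by
      by_contra hc
      push_neg at hc
      exact hψnd (hlem.2 1 hα aux_ord1 T phis ψ h1 hc)
    have hT₀ne : {χ | Lg.Deriv (T ∪ lInst I phis) χ} ≠ Set.univ := by
      intro he
      refine hnd ?_
      have : ψ ∈ {χ | Lg.Deriv (T ∪ lInst I phis) χ} := by rw [he]; trivial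
      exact this
    obtain ⟨U, hU, hTU⟩ := hco _ (Lg.thy_isTheory (T ∪ lInst I phis)) hT₀ne
    have hTsubU : T ⊆ U := fun χ hχ => hTU (Lg.deriv_mem (Or.inl hχ))
    have hψU : ψ ∈ U := hψ U ⟨hU, hTsubU⟩
    apply Lg.simple_not_inc hU
    intro χ
    refine Lg.deriv_cut (Φ := Set.range phis ∪ lInst I phis) ?_ (hlem.1 1 hα aux_ord1 I hI phis χ)
    rintro ρ (⟨i, rfl⟩ | hρ)
    · exact Lg.deriv_mem hψU
    · exact Lg.deriv_mem (hTU (Lg.deriv_mem (Or.inr hρ)))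

lemma semisimple_of_dualLocalIL (hco : Lg.Coatomic) {Ψ' : LFam L Var}
    (hd : Lg.DualLocalIL 2 Ψ') : Lg.Semisimple := by
  intro T hT
  by_cases htriv : T = Set.univ
  · exact ⟨∅, by simp, by simp [htriv]⟩
  · refine ⟨{U | Lg.IsSimple U ∧ T ⊆ U}, fun U hU => hU.1, ?_⟩
    refine Set.Subset.antisymm (Set.subset_sInter fun U hU => hU.2) ?_
    intro ψ hψ
    by_contra hψT
    have hα : (0 : Ordinal.{u}) < 1 := zero_lt_one
    haveI : Nonempty (1 : Ordinal.{u}).ToType := aux_ne1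
    set phis : (1 : Ordinal.{u}).ToType → L.Term Var := fun _ => ψ with hphis
    have hψnd : ¬ Lg.Deriv T ψ := fun h => hψT (hT ψ h)
    obtain ⟨I, hI, hninc⟩ : ∃ I ∈ Ψ' 1, ¬ Lg.Inc (T ∪ lInst I phis) := by
      by_contra hc
      push_neg at hc
      exact hψnd ((hd 1 hα aux_ord1 T phis).2 hc (Classical.arbitrary _))
    have hT₀ne : {χ | Lg.Deriv (T ∪ lInst I phis) χ} ≠ Set.univ := by
      intro he
      refine hninc fun χ => ?_
      have : χ ∈ {χ | Lg.Deriv (T ∪ lInst I phis) χ} := by rw [he]; trivial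
      exact this
    obtain ⟨U, hU, hTU⟩ := hco _ (Lg.thy_isTheory (T ∪ lInst I phis)) hT₀ne
    have hTsubU : T ⊆ U := fun χ hχ => hTU (Lg.deriv_mem (Or.inl hχ))
    have hψU : ψ ∈ U := hψ U ⟨hU, hTsubU⟩
    apply Lg.simple_not_inc hU
    have hder : ∀ i, Lg.Deriv U (phis i) := fun _ => Lg.deriv_mem hψU
    have hIncU := (hd 1 hα aux_ord1 U phis).1 hder I hI
    intro χ
    refine Lg.deriv_cut ?_ (hIncU χ)
    rintro ρ (hρ | hρ)
    · exact Lg.deriv_mem hρ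
    · exact Lg.deriv_mem (hTU (Lg.deriv_mem (Or.inr hρ)))

lemma paramLocalLEM_of_semisimple {Ψ : PFam L Var} (hs : Lg.SimpleParamLocalIL 2 Ψ)
    (hss : Lg.Semisimple) : Lg.ParamLocalLEM 2 Ψ := by
  refine ⟨hs.1, ?_⟩
  intro α hα hκ Γ phis ψ h1 h2
  refine Lg.deriv_of_simple hss fun U hU hΓU => ?_
  by_cases hinc : Lg.Inc (U ∪ Set.range phis)
  · obtain ⟨I, hI, pis, hd⟩ := hs.2 α hα hκ U hU phis hinc
    refine hU.1 ψ (Lg.deriv_cut (Φ := Γ ∪ pInst I phis pis) ?_ (h2 I hI pis))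
    rintro ρ (hρ | hρ)
    · exact Lg.deriv_mem (hΓU hρ)
    · exact hd ρ hρ
  · have hsub := Lg.simple_absorb hU hinc
    refine hU.1 ψ (Lg.deriv_cut (Φ := Γ ∪ Set.range phis) ?_ h1)
    rintro ρ (hρ | hρ)
    · exact Lg.deriv_mem (hΓU hρ)
    · exact Lg.deriv_mem (hsub hρ)

lemma dualParamLocalIL_of_semisimple {Ψ : PFam L Var} (hs : Lg.SimpleParamLocalIL 2 Ψ)
    (hss : Lg.Semisimple) : Lg.DualParamLocalIL 2 Ψ := by
  intro α hα hκ Γ phis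
  constructor
  · intro h I hI pis χ
    refine Lg.deriv_cut (Φ := Set.range phis ∪ pInst I phis pis) ?_
      (hs.1 α hα hκ I hI phis pis χ)
    rintro ρ (⟨i, rfl⟩ | hρ)
    · exact Lg.deriv_mono (h i) Set.subset_union_left
    · exact Lg.deriv_mem (Or.inr hρ)
  · intro h i
    refine Lg.deriv_of_simple hss fun U hU hΓU => ?_
    by_cases hinc : Lg.Inc (U ∪ Set.range phis)
    · exfalso
      obtain ⟨I, hI, pis, hd⟩ := hs.2 α hα hκ U hU phis hinc
      apply Lg.simple_not_inc hU
      intro χ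
      refine Lg.deriv_cut (Φ := Γ ∪ pInst I phis pis) ?_ (h I hI pis χ)
      rintro ρ (hρ | hρ)
      · exact Lg.deriv_mem (hΓU hρ)
      · exact hd ρ hρ
    · exact Lg.simple_absorb hU hinc ⟨i, rfl⟩

lemma semisimple_of_paramLocalLEM (hco : Lg.Coatomic) {Ψ' : PFam L Var}
    (hlem : Lg.ParamLocalLEM 2 Ψ') : Lg.Semisimple := by
  intro T hT
  by_cases htriv : T = Set.univ
  · exact ⟨∅, by simp, by simp [htriv]⟩
  · refine ⟨{U | Lg.IsSimple U ∧ T ⊆ U}, fun U hU => hU.1, ?_⟩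
    refine Set.Subset.antisymm (Set.subset_sInter fun U hU => hU.2) ?_
    intro ψ hψ
    by_contra hψT
    have hα : (0 : Ordinal.{u}) < 1 := zero_lt_one
    haveI : Nonempty (1 : Ordinal.{u}).ToType := aux_ne1
    set phis : (1 : Ordinal.{u}).ToType → L.Term Var := fun _ => ψ with hphis
    have hψnd : ¬ Lg.Deriv T ψ := fun h => hψT (hT ψ h)
    have h1 : Lg.Deriv (T ∪ Set.range phis) ψ :=
      Lg.deriv_mem (Or.inr ⟨Classical.arbitrary _, rfl⟩)
    obtain ⟨I, hI, pis, hnd⟩ :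
        ∃ I ∈ Ψ' 1, ∃ pis, ¬ Lg.Deriv (T ∪ pInst I phis pis) ψ := by
      by_contra hc
      push_neg at hc
      exact hψnd (hlem.2 1 hα aux_ord1 T phis ψ h1 hc)
    have hT₀ne : {χ | Lg.Deriv (T ∪ pInst I phis pis) χ} ≠ Set.univ := by
      intro he
      refine hnd ?_
      have : ψ ∈ {χ | Lg.Deriv (T ∪ pInst I phis pis) χ} := by rw [he]; trivial
      exact this
    obtain ⟨U, hU, hTU⟩ := hco _ (Lg.thy_isTheory (T ∪ pInst I phis pis)) hT₀ne
    have hTsubU : T ⊆ U := fun χ hχ => hTU (Lg.deriv_mem (Or.inl hχ))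
    have hψU : ψ ∈ U := hψ U ⟨hU, hTsubU⟩
    apply Lg.simple_not_inc hU
    intro χ
    refine Lg.deriv_cut (Φ := Set.range phis ∪ pInst I phis pis) ?_
      (hlem.1 1 hα aux_ord1 I hI phis pis χ)
    rintro ρ (⟨i, rfl⟩ | hρ)
    · exact Lg.deriv_mem hψU
    · exact Lg.deriv_mem (hTU (Lg.deriv_mem (Or.inr hρ)))

lemma semisimple_of_dualParamLocalIL (hco : Lg.Coatomic) {Ψ' : PFam L Var}
    (hd : Lg.DualParamLocalIL 2 Ψ') : Lg.Semisimple := by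
  intro T hT
  by_cases htriv : T = Set.univ
  · exact ⟨∅, by simp, by simp [htriv]⟩
  · refine ⟨{U | Lg.IsSimple U ∧ T ⊆ U}, fun U hU => hU.1, ?_⟩
    refine Set.Subset.antisymm (Set.subset_sInter fun U hU => hU.2) ?_
    intro ψ hψ
    by_contra hψT
    have hα : (0 : Ordinal.{u}) < 1 := zero_lt_one
    haveI : Nonempty (1 : Ordinal.{u}).ToType := aux_ne1
    set phis : (1 : Ordinal.{u}).ToType → L.Term Var := fun _ => ψ with hphis
    have hψnd : ¬ Lg.Deriv T ψ := fun h => hψT (hT ψ h)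
    obtain ⟨I, hI, pis, hninc⟩ :
        ∃ I ∈ Ψ' 1, ∃ pis, ¬ Lg.Inc (T ∪ pInst I phis pis) := by
      by_contra hc
      push_neg at hc
      exact hψnd ((hd 1 hα aux_ord1 T phis).2 hc (Classical.arbitrary _))
    have hT₀ne : {χ | Lg.Deriv (T ∪ pInst I phis pis) χ} ≠ Set.univ := by
      intro he
      refine hninc fun χ => ?_
      have : χ ∈ {χ | Lg.Deriv (T ∪ pInst I phis pis) χ} := by rw [he]; trivial
      exact this
    obtain ⟨U, hU, hTU⟩ := hco _ (Lg.thy_isTheory (T ∪ pInst I phis pis)) hT₀ne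
    have hTsubU : T ⊆ U := fun χ hχ => hTU (Lg.deriv_mem (Or.inl hχ))
    have hψU : ψ ∈ U := hψ U ⟨hU, hTsubU⟩
    apply Lg.simple_not_inc hU
    have hder : ∀ i, Lg.Deriv U (phis i) := fun _ => Lg.deriv_mem hψU
    have hIncU := (hd 1 hα aux_ord1 U phis).1 hder I hI pis
    intro χ
    refine Lg.deriv_cut ?_ (hIncU χ)
    rintro ρ (hρ | hρ)
    · exact Lg.deriv_mem hρ
    · exact Lg.deriv_mem (hTU (Lg.deriv_mem (Or.inr hρ)))

end Aux

end Logic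

/-- for a coatomic logic with the simple (parametrized) local IL
w.r.t. `Ψ`, semisimplicity, the (parametrized) local LEM (w.r.t. some family or
w.r.t. `Ψ`), and the dual (parametrized) local IL (w.r.t. some family or w.r.t.
`Ψ`) are all equivalent. -/
theorem statement_13 {L : FirstOrder.Language.{u, u}} {Var : Type u} (Lg : Logic L Var) (hco : Lg.Coatomic) :
    (∀ Ψ : LFam L Var, Lg.SimpleLocalIL 2 Ψ →
      [Lg.Semisimple,
       ∃ Ψ' : LFam L Var, Lg.LocalLEM 2 Ψ',
       ∃ Ψ' : LFam L Var, Lg.DualLocalIL 2 Ψ',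
       Lg.LocalLEM 2 Ψ,
       Lg.DualLocalIL 2 Ψ].TFAE) ∧
    (∀ Ψ : PFam L Var, Lg.SimpleParamLocalIL 2 Ψ →
      [Lg.Semisimple,
       ∃ Ψ' : PFam L Var, Lg.ParamLocalLEM 2 Ψ',
       ∃ Ψ' : PFam L Var, Lg.DualParamLocalIL 2 Ψ',
       Lg.ParamLocalLEM 2 Ψ,
       Lg.DualParamLocalIL 2 Ψ].TFAE) :=  by
  constructor
  · intro Ψ hs
    tfae_have 1 → 4 := fun h => Logic.localLEM_of_semisimple hs h
    tfae_have 4 → 2 := fun h => ⟨Ψ, h⟩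
    tfae_have 2 → 1 := fun ⟨Ψ', h⟩ => Logic.semisimple_of_localLEM hco h
    tfae_have 1 → 5 := fun h => Logic.dualLocalIL_of_semisimple hs h
    tfae_have 5 → 3 := fun h => ⟨Ψ, h⟩
    tfae_have 3 → 1 := fun ⟨Ψ', h⟩ => Logic.semisimple_of_dualLocalIL hco h
    tfae_finish
  · intro Ψ hs
    tfae_have 1 → 4 := fun h => Logic.paramLocalLEM_of_semisimple hs h
    tfae_have 4 → 2 := fun h => ⟨Ψ, h⟩
    tfae_have 2 → 1 := fun ⟨Ψ', h⟩ => Logic.semisimple_of_paramLocalLEM hco h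
    tfae_have 1 → 5 := fun h => Logic.dualParamLocalIL_of_semisimple hs h
    tfae_have 5 → 3 := fun h => ⟨Ψ, h⟩
    tfae_have 3 → 1 := fun ⟨Ψ', h⟩ => Logic.semisimple_of_dualParamLocalIL hco h
    tfae_finish
end
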